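/- Fix t ≥ 1, ρ ∈ [0,1], a symmetric positive definite d×d real matrix Σ0, μ0 ∈ ℝ^d, and ž_t ∈ ℝ^d. Define the backward recursion z_t = ž_t and, for k = t−1, t−2, …, 0, z_k = (1/√α_{k+1}) ( z_{k+1} + (1/2)(2−ρ) β_{k+1} Σ_{k+1}^{-1} ( √(ᾱ_{k+1}) μ0 − z_{k+1} ) ). Then z_0 = A_t^ρ ž_t + B_t^ρ μ0, where A_t^ρ = √(ᾱ_t) Σ0 ( ∏_{i=0}^{t−1} ( I + (1/2) ρ (β_{i+1}/α_{i+1}) Σ_i^{-1} ) ) Σ_t^{-1} and B_t^ρ = (1/2)(2−ρ) ( ∑_{i=2}^{t} ᾱ_{i−1} β_i Σ0 ( ∏_{j=0}^{i−2} ( I + (1/2) ρ (β_{j+1}/α_{j+1}) Σ_j^{-1} ) ) Σ_{i−1}^{-1} Σ_i^{-1} + β_1 Σ_1^{-1} ). -/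

import Mathlib

open Matrix

lemma posDef_smul' {d : ℕ} {A : Matrix (Fin d) (Fin d) ℝ} (hA : A.PosDef)
    {a : ℝ} (ha : 0 < a) : (a • A).PosDef := by
  refine ⟨?_, fun x hx => ?_⟩
  · unfold Matrix.IsHermitian
    rw [conjTranspose_smul, hA.1]; simp
  · have e : (x.sum fun i xi => x.sum fun j xj => star xi * (a • A) i j * xj) =
        a * x.sum fun i xi => x.sum fun j xj => star xi * A i j * xj := by
      simp only [Finsupp.sum, Finset.mul_sum, Matrix.smul_apply, smul_eq_mul]
      exact Finset.sum_congr rfl fun i _ => Finset.sum_congr rfl fun j _ => by ring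
    rw [e]
    exact mul_pos ha (hA.2 hx)

lemma posSemidef_smul_one' {d : ℕ} {a : ℝ} (ha : 0 ≤ a) :
    (a • (1 : Matrix (Fin d) (Fin d) ℝ)).PosSemidef := by
  refine ⟨?_, fun x => ?_⟩
  · unfold Matrix.IsHermitian
    rw [conjTranspose_smul]; simp
  · have e : (x.sum fun i xi => x.sum fun j xj => star xi * (a • (1 : Matrix (Fin d) (Fin d) ℝ)) i j * xj) =
        a * x.sum fun i xi => x.sum fun j xj => star xi * (1 : Matrix (Fin d) (Fin d) ℝ) i j * xj := by
      simp only [Finsupp.sum, Finset.mul_sum, Matrix.smul_apply, smul_eq_mul]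
      exact Finset.sum_congr rfl fun i _ => Finset.sum_congr rfl fun j _ => by ring
    rw [e]
    exact mul_nonneg ha (Matrix.PosSemidef.one.2 x)

noncomputable def Qp (d : ℕ) (ρ : ℝ) (β al : ℕ → ℝ) (S : ℕ → Matrix (Fin d) (Fin d) ℝ)
    (n : ℕ) : Matrix (Fin d) (Fin d) ℝ :=
  ((List.range n).map (fun i =>
    (1 : Matrix (Fin d) (Fin d) ℝ) + ((1/2) * ρ * (β (i+1) / al (i+1))) • (S i)⁻¹)).prod

lemma Qp_zero (d : ℕ) (ρ : ℝ) (β al : ℕ → ℝ) (S : ℕ → Matrix (Fin d) (Fin d) ℝ) :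
    Qp d ρ β al S 0 = 1 := by simp [Qp]

lemma Qp_succ (d : ℕ) (ρ : ℝ) (β al : ℕ → ℝ) (S : ℕ → Matrix (Fin d) (Fin d) ℝ) (n : ℕ) :
    Qp d ρ β al S (n+1) = Qp d ρ β al S n *
      ((1 : Matrix (Fin d) (Fin d) ℝ) + ((1/2) * ρ * (β (n+1) / al (n+1))) • (S n)⁻¹) := by
  simp [Qp, List.range_succ]

theorem stmt_0 (d t : ℕ) (hd : 1 ≤ d) (ht : 1 ≤ t)
    (ρ : ℝ) (hρ : ρ ∈ Set.Icc (0:ℝ) 1)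
    (β : ℕ → ℝ) (hβ : ∀ k, 1 ≤ k → k ≤ t → β k ∈ Set.Ioo (0:ℝ) 1)
    (al : ℕ → ℝ) (hal : ∀ k, al k = 1 - β k)
    (alb : ℕ → ℝ) (halb : ∀ k, alb k = ∏ i ∈ Finset.Icc 1 k, al i)
    (S0 : Matrix (Fin d) (Fin d) ℝ) (hS0 : S0.PosDef)
    (S : ℕ → Matrix (Fin d) (Fin d) ℝ)
    (hS : ∀ k, S k = alb k • S0 + (1 - alb k) • (1 : Matrix (Fin d) (Fin d) ℝ))
    (μ0 zcheck : Fin d → ℝ)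
    (z : ℕ → Fin d → ℝ) (hzt : z t = zcheck)
    (hrec : ∀ k, k < t →
      z k = (Real.sqrt (al (k+1)))⁻¹ •
        (z (k+1) + ((1/2) * (2 - ρ) * β (k+1)) •
          (S (k+1))⁻¹.mulVec (Real.sqrt (alb (k+1)) • μ0 - z (k+1)))) :
    z 0 =
      (Real.sqrt (alb t) •
        (S0 *
          ((List.range t).map (fun i =>
            (1 : Matrix (Fin d) (Fin d) ℝ) +
              ((1/2) * ρ * (β (i+1) / al (i+1))) • (S i)⁻¹)).prod *
          (S t)⁻¹)).mulVec zcheck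
      +
      (((1/2) * (2 - ρ)) •
        ((∑ i ∈ Finset.Icc 2 t, (alb (i-1) * β i) •
            (S0 *
              ((List.range (i-1)).map (fun j =>
                (1 : Matrix (Fin d) (Fin d) ℝ) +
                  ((1/2) * ρ * (β (j+1) / al (j+1))) • (S j)⁻¹)).prod *
              (S (i-1))⁻¹ * (S i)⁻¹))
          + β 1 • (S 1)⁻¹)).mulVec μ0 := by
  obtain ⟨hρ0, hρ1⟩ := hρ
  set c : ℝ := (1/2) * (2 - ρ) with hc
  -- scalar facts
  have halpos : ∀ k, 1 ≤ k → k ≤ t → 0 < al k := by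
    intro k h1 h2; rw [hal]; linarith [(hβ k h1 h2).2]
  have halle : ∀ k, 1 ≤ k → k ≤ t → al k ≤ 1 := by
    intro k h1 h2; rw [hal]; linarith [(hβ k h1 h2).1]
  have halbpos : ∀ k, k ≤ t → 0 < alb k := by
    intro k hk; rw [halb]
    refine Finset.prod_pos fun i hi => ?_
    obtain ⟨h1, h2⟩ := Finset.mem_Icc.1 hi
    exact halpos i h1 (h2.trans hk)
  have halble : ∀ k, k ≤ t → alb k ≤ 1 := by
    intro k hk; rw [halb]
    refine Finset.prod_le_one (fun i hi => ?_) (fun i hi => ?_) <;>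
      obtain ⟨h1, h2⟩ := Finset.mem_Icc.1 hi
    · exact (halpos i h1 (h2.trans hk)).le
    · exact halle i h1 (h2.trans hk)
  have halb0 : alb 0 = 1 := by rw [halb]; simp
  have halbsucc : ∀ k, alb (k+1) = alb k * al (k+1) := by
    intro k
    rw [halb, halb, Finset.prod_Icc_succ_top (Nat.le_add_left 1 k)]
  have hS00 : S 0 = S0 := by rw [hS, halb0]; simp
  -- matrix facts
  have hSpos : ∀ k, k ≤ t → (S k).PosDef := by
    intro k hk
    rw [hS]
    exact (posDef_smul' hS0 (halbpos k hk)).add_posSemidef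
      (posSemidef_smul_one' (by linarith [halble k hk]))
  have hUnit : ∀ k, k ≤ t → IsUnit (S k).det :=
    fun k hk => (hSpos k hk).det_pos.ne'.isUnit
  have hinv : ∀ k, k ≤ t → S k * (S k)⁻¹ = 1 :=
    fun k hk => Matrix.mul_nonsing_inv _ (hUnit k hk)
  have hinv' : ∀ k, k ≤ t → (S k)⁻¹ * S k = 1 :=
    fun k hk => Matrix.nonsing_inv_mul _ (hUnit k hk)
  have hSrec : ∀ k, S (k+1) = al (k+1) • S k + β (k+1) • 1 := by
    intro k
    rw [hS (k+1), hS k, halbsucc k, hal (k+1)]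
    module
  -- the key matrix step identity
  have hM : ∀ n, n < t →
      (Real.sqrt (al (n+1)))⁻¹ •
        ((1 : Matrix (Fin d) (Fin d) ℝ) - (c * β (n+1)) • (S (n+1))⁻¹) =
      Real.sqrt (al (n+1)) •
        (S n * ((1 : Matrix (Fin d) (Fin d) ℝ) +
          ((1/2) * ρ * (β (n+1) / al (n+1))) • (S n)⁻¹) * (S (n+1))⁻¹) := by
    intro n hn
    have hn1 : n + 1 ≤ t := hn
    have hapos := halpos (n+1) (Nat.le_add_left 1 n) hn1
    have hsa : Real.sqrt (al (n+1)) * Real.sqrt (al (n+1)) = al (n+1) :=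
      Real.mul_self_sqrt hapos.le
    have hsapos : 0 < Real.sqrt (al (n+1)) := Real.sqrt_pos.2 hapos
    -- reduce to identity after multiplying by S (n+1) on the right
    have cancel : ∀ X Y : Matrix (Fin d) (Fin d) ℝ,
        X * S (n+1) = Y * S (n+1) → X = Y := by
      intro X Y h
      have := congrArg (· * (S (n+1))⁻¹) h
      simpa [mul_assoc, hinv (n+1) hn1] using this
    apply cancel
    rw [Matrix.smul_mul, Matrix.smul_mul, mul_assoc, mul_assoc, hinv' (n+1) hn1, mul_one,
      Matrix.sub_mul, Matrix.smul_mul, hinv' (n+1) hn1, one_mul,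
      Matrix.mul_add, mul_one, Matrix.mul_smul, hinv n (Nat.le_of_lt hn), hSrec n]
    have hsq : Real.sqrt (al (n+1)) ^ 2 = al (n+1) := Real.sq_sqrt hapos.le
    match_scalars <;> field_simp <;>
      simp only [hsq] <;> ring
  -- vector-level one-step recursion
  have hstep : ∀ n, n < t → z n =
      ((Real.sqrt (al (n+1)))⁻¹ •
        ((1 : Matrix (Fin d) (Fin d) ℝ) - (c * β (n+1)) • (S (n+1))⁻¹)).mulVec (z (n+1))
      + (c * β (n+1) * Real.sqrt (alb n)) • ((S (n+1))⁻¹.mulVec μ0) := by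
    intro n hn
    have hapos := halpos (n+1) (Nat.le_add_left 1 n) hn
    have hsane : Real.sqrt (al (n+1)) ≠ 0 := (Real.sqrt_pos.2 hapos).ne'
    have hsqrtmul : Real.sqrt (alb (n+1)) = Real.sqrt (alb n) * Real.sqrt (al (n+1)) := by
      rw [halbsucc, Real.sqrt_mul (halbpos n (Nat.le_of_lt hn)).le]
    rw [hrec n hn, hsqrtmul]
    simp only [Matrix.mulVec_smul, Matrix.smul_mulVec, Matrix.sub_mulVec,
      Matrix.mulVec_sub, Matrix.one_mulVec, smul_sub, smul_add, smul_smul]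
    match_scalars <;> field_simp <;> ring
  -- the main induction
  have key : ∀ n, n ≤ t → z 0 =
      (Real.sqrt (alb n) • (S0 * Qp d ρ β al S n * (S n)⁻¹)).mulVec (z n)
      + (∑ i ∈ Finset.Icc 1 n, (c * (alb (i-1) * β i)) •
          (S0 * Qp d ρ β al S (i-1) * (S (i-1))⁻¹ * (S i)⁻¹)).mulVec μ0 := by
    intro n
    induction n with
    | zero =>
      intro _
      have h1 : S0 * Qp d ρ β al S 0 * (S 0)⁻¹ = 1 := by
        rw [Qp_zero, mul_one, ← hS00, hinv 0 (Nat.zero_le t)]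
      simp [h1, halb0]
    | succ n ih =>
      intro hn1
      have hn : n < t := hn1
      have hrn : Real.sqrt (alb n) * Real.sqrt (alb n) = alb n :=
        Real.mul_self_sqrt (halbpos n hn.le).le
      have hsqrtmul : Real.sqrt (alb (n+1)) = Real.sqrt (alb n) * Real.sqrt (al (n+1)) := by
        rw [halbsucc, Real.sqrt_mul (halbpos n hn.le).le]
      -- product of the accumulated matrix with the step matrix
      have hAM : (Real.sqrt (alb n) • (S0 * Qp d ρ β al S n * (S n)⁻¹)) *
          ((Real.sqrt (al (n+1)))⁻¹ •
            ((1 : Matrix (Fin d) (Fin d) ℝ) - (c * β (n+1)) • (S (n+1))⁻¹)) =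
          Real.sqrt (alb (n+1)) • (S0 * Qp d ρ β al S (n+1) * (S (n+1))⁻¹) := by
        rw [hM n hn, Matrix.smul_mul, Matrix.mul_smul, smul_smul, hsqrtmul, Qp_succ]
        congr 1
        simp only [Matrix.mul_assoc]
        rw [← Matrix.mul_assoc ((S n)⁻¹) (S n), hinv' n hn.le, Matrix.one_mul]
      -- the new summand
      have hB : (Real.sqrt (alb n) • (S0 * Qp d ρ β al S n * (S n)⁻¹)).mulVec
            ((c * β (n+1) * Real.sqrt (alb n)) • ((S (n+1))⁻¹.mulVec μ0)) =
          ((c * (alb n * β (n+1))) •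
            (S0 * Qp d ρ β al S n * (S n)⁻¹ * (S (n+1))⁻¹)).mulVec μ0 := by
        rw [Matrix.mulVec_smul, Matrix.mulVec_mulVec, Matrix.smul_mul,
          Matrix.smul_mulVec, smul_smul, Matrix.smul_mulVec]
        congr 1
        linear_combination (c * β (n+1)) * hrn
      rw [ih hn.le, hstep n hn, Matrix.mulVec_add, Matrix.mulVec_mulVec, hAM, hB,
        Finset.sum_Icc_succ_top (Nat.le_add_left 1 n), Matrix.add_mulVec]
      simp only [Nat.add_sub_cancel]
      abel
  -- assemble the final statement
  have hQt : ((List.range t).map (fun i =>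
      (1 : Matrix (Fin d) (Fin d) ℝ) +
        ((1/2) * ρ * (β (i+1) / al (i+1))) • (S i)⁻¹)).prod = Qp d ρ β al S t := rfl
  have hQi : ∀ i : ℕ, ((List.range (i-1)).map (fun j =>
      (1 : Matrix (Fin d) (Fin d) ℝ) +
        ((1/2) * ρ * (β (j+1) / al (j+1))) • (S j)⁻¹)).prod = Qp d ρ β al S (i-1) :=
    fun i => rfl
  simp only [hQt, hQi]
  rw [key t le_rfl, hzt]
  congr 1
  -- sums agree
  have hsplit : Finset.Icc 1 t = insert 1 (Finset.Icc 2 t) := by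
    ext x
    simp only [Finset.mem_Icc, Finset.mem_insert]
    omega
  have h1term : (c * (alb 0 * β 1)) •
      (S0 * Qp d ρ β al S 0 * (S 0)⁻¹ * (S 1)⁻¹) = c • (β 1 • (S 1)⁻¹) := by
    rw [Qp_zero, mul_one, ← hS00, hinv 0 (Nat.zero_le t), one_mul, halb0, smul_smul]
    ring_nf
  have hsum : (∑ i ∈ Finset.Icc 1 t, (c * (alb (i-1) * β i)) •
      (S0 * Qp d ρ β al S (i-1) * (S (i-1))⁻¹ * (S i)⁻¹)) =
      c • ((∑ i ∈ Finset.Icc 2 t, (alb (i-1) * β i) •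
        (S0 * Qp d ρ β al S (i-1) * (S (i-1))⁻¹ * (S i)⁻¹)) + β 1 • (S 1)⁻¹) := by
    rw [hsplit, Finset.sum_insert (by simp), smul_add, Finset.smul_sum, add_comm]
    congr 1
    exact Finset.sum_congr rfl fun i hi => (smul_smul c _ _).symm
  rw [hsum]
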